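/- Let G be a finite weighted graph with distinct edge weights and minimum spanning forest F, and let e = (u,v) be a new edge with endpoints in the same tree of F. If w(e) is less than the maximum weight w(e') among edges on the unique u–v path in F, then the minimum spanning forest of G ∪ {e} equals (F ∖ {e'}) ∪ {e}; if w(e) exceeds all weights on that path, the minimum spanning forest of G ∪ {e} equals F. -/

import Mathlib

/-- `F` is a spanning forest of the graph with edge set `E`: it is a subset of `E`,
acyclic, and has the same reachability relation as `E`. -/
def IsSpanningForest (V : Type) (E F : Finset (Sym2 V)) : Prop :=
  F ⊆ E ∧ (SimpleGraph.fromEdgeSet (↑F : Set (Sym2 V))).IsAcyclic ∧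
    ∀ u v : V, (SimpleGraph.fromEdgeSet (↑E : Set (Sym2 V))).Reachable u v ↔
      (SimpleGraph.fromEdgeSet (↑F : Set (Sym2 V))).Reachable u v

/-- `F` is a minimum spanning forest of the graph with edge set `E` and weights `w`. -/
def IsMSF (V : Type) (w : Sym2 V → ℝ) (E F : Finset (Sym2 V)) : Prop :=
  IsSpanningForest V E F ∧
    ∀ F' : Finset (Sym2 V), IsSpanningForest V E F' → ∑ e ∈ F, w e ≤ ∑ e ∈ F', w e


open SimpleGraph

namespace MSFAux

variable {V : Type}

lemma acyclic_mono {G H : SimpleGraph V} (hle : H ≤ G) (hG : G.IsAcyclic) :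
    H.IsAcyclic := fun _ c hc => hG (c.mapLe hle) ((Walk.mapLe_isCycle hle).mpr hc)

lemma reachable_of_adj_reachable {G H : SimpleGraph V}
    (hadj : ∀ x y, G.Adj x y → H.Reachable x y) {a b : V} :
    G.Reachable a b → H.Reachable a b := by
  rintro ⟨q⟩
  induction q with
  | nil => exact Reachable.refl _
  | cons h q ih => exact (hadj _ _ h).trans ih

lemma crossing {G H : SimpleGraph V} {a b : V} (p : G.Walk a b) :
    ¬ H.Reachable a b →
    ∃ x y, s(x, y) ∈ p.edges ∧ H.Reachable a x ∧ ¬ H.Reachable a y := by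
  induction p with
  | nil => intro hr; exact absurd (Reachable.refl _) hr
  | @cons a c b hac q ih =>
    intro hr
    by_cases hac' : H.Reachable a c
    · have hcb : ¬ H.Reachable c b := fun h => hr (hac'.trans h)
      obtain ⟨x, y, hxy, hcx, hcy⟩ := ih hcb
      exact ⟨x, y, by simp [hxy], hac'.trans hcx, fun h => hcy (hac'.symm.trans h)⟩
    · exact ⟨a, c, by simp, Reachable.refl _, hac'⟩

lemma reach_sup_single {H : SimpleGraph V} {u v : V}
    (hre : ¬ H.Reachable u v) {a b : V} :
    (H ⊔ fromEdgeSet {s(u, v)}).Reachable a b →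
    H.Reachable a b ∨ (H.Reachable a u ∧ H.Reachable v b) ∨
      (H.Reachable a v ∧ H.Reachable u b) := by
  rintro ⟨q⟩
  induction q with
  | nil => exact Or.inl (Reachable.refl _)
  | @cons a c b hac q ih =>
    rw [sup_adj, fromEdgeSet_adj, Set.mem_singleton_iff] at hac
    rcases hac with hac | ⟨heq, hne⟩
    · rcases ih with h1 | ⟨h2, h3⟩ | ⟨h2, h3⟩
      · exact Or.inl (hac.reachable.trans h1)
      · exact Or.inr (Or.inl ⟨hac.reachable.trans h2, h3⟩)
      · exact Or.inr (Or.inr ⟨hac.reachable.trans h2, h3⟩)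
    · rcases Sym2.eq_iff.mp heq with ⟨rfl, rfl⟩ | ⟨rfl, rfl⟩
      · rcases ih with h1 | ⟨h2, h3⟩ | ⟨h2, h3⟩
        · exact Or.inr (Or.inl ⟨Reachable.refl _, h1⟩)
        · exact absurd h2.symm hre
        · exact Or.inl h3
      · rcases ih with h1 | ⟨h2, h3⟩ | ⟨h2, h3⟩
        · exact Or.inr (Or.inr ⟨Reachable.refl _, h1⟩)
        · exact Or.inl h3
        · exact absurd h2 hre

lemma single_sdiff_single {f g : Sym2 V} (hne : g ≠ f) :
    (fromEdgeSet {g} : SimpleGraph V) \ fromEdgeSet {f} = fromEdgeSet {g} := by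
  ext a b
  simp only [sdiff_adj, fromEdgeSet_adj, Set.mem_singleton_iff]
  constructor
  · rintro ⟨h, -⟩; exact h
  · rintro ⟨h1, h2⟩
    exact ⟨⟨h1, h2⟩, fun h => hne (h.1 ▸ h1 ▸ rfl)⟩

lemma acyclic_sup_single {H : SimpleGraph V} {u v : V} (huv : u ≠ v)
    (hH : H.IsAcyclic) (hre : ¬ H.Reachable u v) :
    (H ⊔ fromEdgeSet {s(u, v)}).IsAcyclic := by
  rw [isAcyclic_iff_forall_edge_isBridge]
  intro g hg
  induction g using Sym2.ind with
  | _ x y =>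
  rw [edgeSet_sup, Set.mem_union] at hg
  rcases hg with hg | hg
  · rw [mem_edgeSet] at hg
    have hne : s(x, y) ≠ s(u, v) := by
      intro h
      rcases Sym2.eq_iff.mp h with ⟨rfl, rfl⟩ | ⟨rfl, rfl⟩
      · exact hre hg.reachable
      · exact hre hg.symm.reachable
    rw [isBridge_iff]
    show ¬ ((H ⊔ fromEdgeSet {s(u, v)}) \ fromEdgeSet {s(x, y)}).Reachable x y
    intro hreach
    rw [sup_sdiff, single_sdiff_single hne.symm] at hreach
    have hbr : ¬ (H \ fromEdgeSet {s(x, y)}).Reachable x y :=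
      isBridge_iff.mp (isAcyclic_iff_forall_adj_isBridge.mp hH hg)
    have hre0 : ¬ (H \ fromEdgeSet {s(x, y)}).Reachable u v :=
      fun h => hre (h.mono sdiff_le)
    rcases reach_sup_single hre0 hreach with h1 | ⟨h2, h3⟩ | ⟨h2, h3⟩
    · exact hbr h1
    · exact hre ((h2.mono sdiff_le).symm.trans (hg.reachable.trans (h3.mono sdiff_le).symm))
    · exact hre ((h3.mono sdiff_le).trans (hg.symm.reachable.trans (h2.mono sdiff_le)))
  · rw [edgeSet_fromEdgeSet, Set.mem_diff, Set.mem_singleton_iff] at hg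
    obtain ⟨heq, -⟩ := hg
    rw [heq, isBridge_iff]
    show ¬ ((H ⊔ fromEdgeSet {s(u, v)}) \ fromEdgeSet {s(u, v)}).Reachable u v
    intro hreach
    rw [sup_sdiff, sdiff_self] at hreach
    exact hre (hreach.mono (sup_le sdiff_le bot_le))

lemma fromFinset_insert [DecidableEq (Sym2 V)] (S : Finset (Sym2 V)) (f : Sym2 V) :
    fromEdgeSet (↑(insert f S) : Set (Sym2 V)) = fromEdgeSet ↑S ⊔ fromEdgeSet {f} := by
  rw [Finset.coe_insert, Set.insert_eq, fromEdgeSet_union, sup_comm]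

lemma fromFinset_erase [DecidableEq (Sym2 V)] (S : Finset (Sym2 V)) (f : Sym2 V) :
    fromEdgeSet (↑(S.erase f) : Set (Sym2 V)) = fromEdgeSet ↑S \ fromEdgeSet {f} := by
  rw [Finset.coe_erase, fromEdgeSet_sdiff]

lemma reach_of_sym2_eq {K : SimpleGraph V} {u v a b : V} (h : K.Reachable u v)
    (he : s(a, b) = s(u, v)) : K.Reachable a b := by
  rcases Sym2.eq_iff.mp he with ⟨rfl, rfl⟩ | ⟨rfl, rfl⟩
  · exact h
  · exact h.symm

lemma exchange [DecidableEq V]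
    (E F F' : Finset (Sym2 V)) {u v : V} (huv : u ≠ v)
    (heE : s(u, v) ∉ E) (hFE : F ⊆ E)
    (hFreach : ∀ a b : V, (fromEdgeSet (↑E : Set (Sym2 V))).Reachable a b ↔
      (fromEdgeSet (↑F : Set (Sym2 V))).Reachable a b)
    (p : (fromEdgeSet (↑F : Set (Sym2 V))).Walk u v)
    (hF' : IsSpanningForest V (insert s(u, v) E) F') (heF' : s(u, v) ∈ F') :
    ∃ f ∈ p.edges, f ∉ F'.erase s(u, v) ∧
      IsSpanningForest V E (insert f (F'.erase s(u, v))) := by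
  obtain ⟨hF'sub, hF'ac, hF'reach⟩ := hF'
  have hadj : (fromEdgeSet (↑F' : Set (Sym2 V))).Adj u v :=
    (fromEdgeSet_adj _).mpr ⟨Finset.mem_coe.mpr heF', huv⟩
  have hbr : ¬ (fromEdgeSet (↑F' : Set (Sym2 V)) \ fromEdgeSet {s(u, v)}).Reachable u v :=
    isBridge_iff.mp (isAcyclic_iff_forall_adj_isBridge.mp hF'ac hadj)
  rw [← fromFinset_erase] at hbr
  obtain ⟨x, y, hxyp, hux, huy⟩ := crossing p hbr
  have hadjF : (fromEdgeSet (↑F : Set (Sym2 V))).Adj x y :=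
    (mem_edgeSet _).mp (p.edges_subset_edgeSet hxyp)
  have hxy : x ≠ y := hadjF.ne
  have hxyF : s(x, y) ∈ F := by
    have := p.edges_subset_edgeSet hxyp
    rw [edgeSet_fromEdgeSet] at this
    exact_mod_cast this.1
  have hnotF' : s(x, y) ∉ F'.erase s(u, v) := fun hmem =>
    huy (hux.trans (Adj.reachable ((fromEdgeSet_adj _).mpr ⟨Finset.mem_coe.mpr hmem, hxy⟩)))
  have hsubE : insert s(x, y) (F'.erase s(u, v)) ⊆ E := by
    intro g hg
    rcases Finset.mem_insert.mp hg with rfl | hg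
    · exact hFE hxyF
    · have hg' := Finset.mem_erase.mp hg
      rcases Finset.mem_insert.mp (hF'sub hg'.2) with rfl | h
      · exact absurd rfl hg'.1
      · exact h
  refine ⟨s(x, y), hxyp, hnotF', hsubE, ?_, ?_⟩
  · rw [fromFinset_insert]
    have hHle : fromEdgeSet (↑(F'.erase s(u, v)) : Set (Sym2 V)) ≤ fromEdgeSet ↑F' :=
      fromEdgeSet_mono (Finset.coe_subset.mpr (Finset.erase_subset _ _))
    exact acyclic_sup_single hxy (acyclic_mono hHle hF'ac) (fun h => huy (hux.trans h))
  · have hEsub : (↑E : Set (Sym2 V)) ⊆ ↑(insert s(u, v) E) :=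
      Finset.coe_subset.mpr (Finset.subset_insert _ _)
    have hle'' : fromEdgeSet (↑(F'.erase s(u, v)) : Set (Sym2 V)) ≤
        fromEdgeSet ↑(insert s(x, y) (F'.erase s(u, v))) :=
      fromEdgeSet_mono (Finset.coe_subset.mpr (Finset.subset_insert _ _))
    have hadj'' : (fromEdgeSet (↑(insert s(x, y) (F'.erase s(u, v))) : Set (Sym2 V))).Adj x y :=
      (fromEdgeSet_adj _).mpr ⟨Finset.mem_coe.mpr (Finset.mem_insert_self _ _), hxy⟩
    -- y is reachable from v in F'.erase s(u,v)
    have hyv : (fromEdgeSet (↑(F'.erase s(u, v)) : Set (Sym2 V))).Reachable y v := by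
      have hy_supp : y ∈ p.support := p.snd_mem_support_of_mem_edges hxyp
      have hyF : (fromEdgeSet (↑F : Set (Sym2 V))).Reachable y v :=
        (Reachable.symm ⟨p.takeUntil y hy_supp⟩).trans ⟨p⟩
      have hyF' := (hF'reach y v).mp (((hFreach y v).mpr hyF).mono (fromEdgeSet_mono hEsub))
      have hF'eq : fromEdgeSet (↑F' : Set (Sym2 V)) =
          fromEdgeSet ↑(F'.erase s(u, v)) ⊔ fromEdgeSet {s(u, v)} := by
        rw [← fromFinset_insert, Finset.insert_erase heF']
      rw [hF'eq] at hyF'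
      rcases reach_sup_single hbr hyF' with h1 | ⟨h2, h3⟩ | ⟨h2, h3⟩
      · exact h1
      · exact absurd h2.symm huy
      · exact h2
    have huvF'' : (fromEdgeSet (↑(insert s(x, y) (F'.erase s(u, v))) : Set (Sym2 V))).Reachable u v :=
      ((hux.mono hle'').trans hadj''.reachable).trans (hyv.mono hle'')
    intro a b
    constructor
    · intro hab
      have h2 := (hF'reach a b).mp (hab.mono (fromEdgeSet_mono hEsub))
      refine reachable_of_adj_reachable ?_ h2
      intro x' y' hx'y'
      rw [fromEdgeSet_adj _] at hx'y'
      by_cases hcase : s(x', y') = s(u, v)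
      · exact reach_of_sym2_eq huvF'' hcase
      · have hmem : s(x', y') ∈ F'.erase s(u, v) :=
          Finset.mem_erase.mpr ⟨hcase, Finset.mem_coe.mp hx'y'.1⟩
        exact Adj.reachable ((fromEdgeSet_adj _).mpr
          ⟨Finset.mem_coe.mpr (Finset.mem_insert_of_mem hmem), hx'y'.2⟩)
    · exact fun h => h.mono (fromEdgeSet_mono (Finset.coe_subset.mpr hsubE))

end MSFAux

open MSFAux

/-- Inserting an edge `e = s(u,v)` whose endpoints lie in the same tree of the
MSF `F`: let `e'` be the heaviest edge on the unique `u`–`v` path `p` in `F`.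
If `w e < w e'`, the new MSF is `(F ∖ {e'}) ∪ {e}`; if `w e` exceeds all weights
on the path, the new MSF is `F`. -/
theorem msf_insert_same_tree {V : Type} [Fintype V] [DecidableEq V]
    (E F : Finset (Sym2 V)) (w : Sym2 V → ℝ)
    (hF : IsMSF V w E F)
    (u v : V) (huv : u ≠ v) (e : Sym2 V) (he : e = s(u, v)) (heE : e ∉ E)
    (hinj : Set.InjOn w (↑(insert e E) : Set (Sym2 V)))
    (hnd : ∀ f ∈ insert e E, ¬ f.IsDiag)
    (p : (SimpleGraph.fromEdgeSet (↑F : Set (Sym2 V))).Walk u v) (hp : p.IsPath)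
    (e' : Sym2 V) (he'p : e' ∈ p.edges)
    (hmax : ∀ f ∈ p.edges, f ≠ e' → w f < w e') :
    (w e < w e' → IsMSF V w (insert e E) (insert e (F.erase e'))) ∧
    ((∀ f ∈ p.edges, w f < w e) → IsMSF V w (insert e E) F) := by
  subst he
  obtain ⟨⟨hFE, hFac, hFreach⟩, hFmin⟩ := hF
  have heF : s(u, v) ∉ F := fun h => heE (hFE h)
  have hpF : ∀ f ∈ p.edges, f ∈ F := by
    intro f hf
    have := p.edges_subset_edgeSet hf
    rw [edgeSet_fromEdgeSet] at this
    exact_mod_cast this.1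
  have he'F : e' ∈ F := hpF e' he'p
  have huvE : (fromEdgeSet (↑E : Set (Sym2 V))).Reachable u v := (hFreach u v).mpr ⟨p⟩
  have hEsub : (↑E : Set (Sym2 V)) ⊆ ↑(insert s(u, v) E) :=
    Finset.coe_subset.mpr (Finset.subset_insert _ _)
  have hInsE : ∀ a b : V, (fromEdgeSet (↑(insert s(u, v) E) : Set (Sym2 V))).Reachable a b ↔
      (fromEdgeSet (↑E : Set (Sym2 V))).Reachable a b := by
    intro a b
    constructor
    · refine reachable_of_adj_reachable ?_
      intro x y hxy
      rw [fromEdgeSet_adj _] at hxy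
      rcases Finset.mem_insert.mp (Finset.mem_coe.mp hxy.1) with heq | hmem
      · exact reach_of_sym2_eq huvE heq
      · exact Adj.reachable ((fromEdgeSet_adj _).mpr ⟨Finset.mem_coe.mpr hmem, hxy.2⟩)
    · exact fun h => h.mono (fromEdgeSet_mono hEsub)
  have hSFnoE : ∀ F' : Finset (Sym2 V), IsSpanningForest V (insert s(u, v) E) F' →
      s(u, v) ∉ F' → IsSpanningForest V E F' := by
    rintro F' ⟨h1, h2, h3⟩ hne
    refine ⟨?_, h2, ?_⟩
    · intro g hg
      rcases Finset.mem_insert.mp (h1 hg) with rfl | h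
      · exact absurd hg hne
      · exact h
    · exact fun a b => (hInsE a b).symm.trans (h3 a b)
  have hexch : ∀ F' : Finset (Sym2 V), IsSpanningForest V (insert s(u, v) E) F' →
      s(u, v) ∈ F' →
      ∃ f ∈ p.edges, ∑ g ∈ F, w g ≤ ∑ g ∈ F', w g - w s(u, v) + w f := by
    intro F' hSF hmem
    obtain ⟨f, hfp, hfnot, hSF''⟩ := exchange E F F' huv heE hFE hFreach p hSF hmem
    refine ⟨f, hfp, ?_⟩
    have h1 := hFmin _ hSF''
    rw [Finset.sum_insert hfnot] at h1
    have h2 := Finset.sum_erase_add F' w hmem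
    linarith
  constructor
  · -- case w e < w e'
    intro hw1
    -- u, v are not reachable in F.erase e'
    have hre' : ¬ (fromEdgeSet (↑(F.erase e') : Set (Sym2 V))).Reachable u v := by
      rintro ⟨q0⟩
      have hle : fromEdgeSet (↑(F.erase e') : Set (Sym2 V)) ≤ fromEdgeSet ↑F :=
        fromEdgeSet_mono (Finset.coe_subset.mpr (Finset.erase_subset _ _))
      have hq : (q0.toPath.1.mapLe hle).IsPath := (Walk.mapLe_isPath hle).mpr q0.toPath.2
      have hpq : p = q0.toPath.1.mapLe hle :=
        congrArg Subtype.val (hFac.path_unique ⟨p, hp⟩ ⟨q0.toPath.1.mapLe hle, hq⟩)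
      have he'q : e' ∈ (q0.toPath.1.mapLe hle).edges := hpq ▸ he'p
      have he'mem : e' ∈ q0.toPath.1.edges := by
        rwa [Walk.edges_mapLe_eq_edges] at he'q
      have hmem := q0.toPath.1.edges_subset_edgeSet he'mem
      rw [edgeSet_fromEdgeSet] at hmem
      have : e' ∈ F.erase e' := by exact_mod_cast hmem.1
      simp at this
    obtain ⟨x, y, hxyp, hux, huy⟩ := crossing p hre'
    have hadjF : (fromEdgeSet (↑F : Set (Sym2 V))).Adj x y :=
      (mem_edgeSet _).mp (p.edges_subset_edgeSet hxyp)
    have hxy : x ≠ y := hadjF.ne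
    have he'xy : s(x, y) = e' := by
      by_contra hne
      exact huy (hux.trans (Adj.reachable ((fromEdgeSet_adj _).mpr
        ⟨Finset.mem_coe.mpr (Finset.mem_erase.mpr ⟨hne, hpF _ hxyp⟩), hxy⟩)))
    have hvy : (fromEdgeSet (↑(F.erase e') : Set (Sym2 V))).Reachable v y := by
      have hre'' : ¬ (fromEdgeSet (↑(F.erase e') : Set (Sym2 V))).Reachable v u :=
        fun h => hre' h.symm
      obtain ⟨x', y', hxyp', hvx', hvy'⟩ := crossing p.reverse hre''
      have hxyp'' : s(x', y') ∈ p.edges := by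
        rw [Walk.edges_reverse] at hxyp'; exact List.mem_reverse.mp hxyp'
      have hadj' : (fromEdgeSet (↑F : Set (Sym2 V))).Adj x' y' :=
        (mem_edgeSet _).mp (p.edges_subset_edgeSet hxyp'')
      have he'xy' : s(x', y') = e' := by
        by_contra hne
        exact hvy' (hvx'.trans (Adj.reachable ((fromEdgeSet_adj _).mpr
          ⟨Finset.mem_coe.mpr (Finset.mem_erase.mpr ⟨hne, hpF _ hxyp''⟩), hadj'.ne⟩)))
      rcases Sym2.eq_iff.mp (he'xy'.trans he'xy.symm) with ⟨rfl, rfl⟩ | ⟨rfl, rfl⟩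
      · exact absurd (hux.trans hvx'.symm) hre'
      · exact hvx'
    have hHle2 : fromEdgeSet (↑(F.erase e') : Set (Sym2 V)) ≤
        fromEdgeSet ↑(insert s(u, v) (F.erase e')) :=
      fromEdgeSet_mono (Finset.coe_subset.mpr (Finset.subset_insert _ _))
    have hF2adj : (fromEdgeSet (↑(insert s(u, v) (F.erase e')) : Set (Sym2 V))).Adj u v :=
      (fromEdgeSet_adj _).mpr ⟨Finset.mem_coe.mpr (Finset.mem_insert_self _ _), huv⟩
    have hFtoF2 : ∀ a b : V, (fromEdgeSet (↑F : Set (Sym2 V))).Reachable a b →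
        (fromEdgeSet (↑(insert s(u, v) (F.erase e')) : Set (Sym2 V))).Reachable a b := by
      refine fun a b => reachable_of_adj_reachable ?_
      intro x' y' hx'y'
      rw [fromEdgeSet_adj _] at hx'y'
      by_cases hc : s(x', y') = e'
      · have hxyreach : (fromEdgeSet (↑(insert s(u, v) (F.erase e')) :
            Set (Sym2 V))).Reachable x y :=
          ((hux.mono hHle2).symm.trans hF2adj.reachable).trans (hvy.mono hHle2)
        exact reach_of_sym2_eq hxyreach (hc.trans he'xy.symm)
      · exact Adj.reachable ((fromEdgeSet_adj _).mpr ⟨Finset.mem_coe.mpr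
          (Finset.mem_insert_of_mem (Finset.mem_erase.mpr ⟨hc, Finset.mem_coe.mp hx'y'.1⟩)),
          hx'y'.2⟩)
    refine ⟨⟨?_, ?_, ?_⟩, ?_⟩
    · intro g hg
      rcases Finset.mem_insert.mp hg with rfl | hg
      · exact Finset.mem_insert_self _ _
      · exact Finset.mem_insert_of_mem (hFE (Finset.mem_of_mem_erase hg))
    · rw [fromFinset_insert]
      exact acyclic_sup_single huv (acyclic_mono
        (fromEdgeSet_mono (Finset.coe_subset.mpr (Finset.erase_subset _ _))) hFac) hre'
    · intro a b
      constructor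
      · refine reachable_of_adj_reachable ?_
        intro x' y' h
        rw [fromEdgeSet_adj _] at h
        rcases Finset.mem_insert.mp (Finset.mem_coe.mp h.1) with heq | hmem
        · exact reach_of_sym2_eq hF2adj.reachable heq
        · exact hFtoF2 _ _ ((hFreach _ _).mp
            (Adj.reachable ((fromEdgeSet_adj _).mpr ⟨Finset.mem_coe.mpr hmem, h.2⟩)))
      · intro h
        refine h.mono (fromEdgeSet_mono (Finset.coe_subset.mpr ?_))
        intro g hg
        rcases Finset.mem_insert.mp hg with rfl | hg
        · exact Finset.mem_insert_self _ _
        · exact Finset.mem_insert_of_mem (hFE (Finset.mem_of_mem_erase hg))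
    · intro F' hSF
      have h1 : s(u, v) ∉ F.erase e' := fun h => heF (Finset.mem_of_mem_erase h)
      have hsum2 : ∑ g ∈ insert s(u, v) (F.erase e'), w g =
          ∑ g ∈ F, w g - w e' + w s(u, v) := by
        rw [Finset.sum_insert h1]
        have := Finset.sum_erase_add F w he'F
        linarith
      by_cases hmem : s(u, v) ∈ F'
      · obtain ⟨f, hfp, hle⟩ := hexch F' hSF hmem
        have hfe' : w f ≤ w e' := by
          by_cases hfe : f = e'
          · rw [hfe]
          · exact le_of_lt (hmax f hfp hfe)
        linarith
      · have := hFmin F' (hSFnoE F' hSF hmem)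
        linarith
  · -- case w e bigger than all path weights
    intro hw2
    refine ⟨⟨hFE.trans (Finset.subset_insert _ _), hFac,
      fun a b => (hInsE a b).trans (hFreach a b)⟩, ?_⟩
    intro F' hSF
    by_cases hmem : s(u, v) ∈ F'
    · obtain ⟨f, hfp, hle⟩ := hexch F' hSF hmem
      have := hw2 f hfp
      linarith
    · exact hFmin F' (hSFnoE F' hSF hmem)
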